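/- Let X be a closed orientable topological manifold of dimension n, E and F real vector bundles of the same fibre dimension over X, and L : E → F a bundle morphism. If the first Pontryagin classes satisfy p₁(E) − p₁(F) ∉ im β⁴ ⊂ H⁴(X;ℤ), where β⁴ : Ext¹_ℤ(H₃(X;ℤ),ℤ) → H⁴(X;ℤ) is the map from the universal coefficient theorem, then the covering dimension of Σ(L) is at least n − 4. -/
import Mathlib


set_option autoImplicit false

noncomputable section

open Bundle Set Module

/-- `HasCovDimLE Y m` : every finite open cover of `Y` has a finite open refinement in which
no point is included in more than `m + 1` elements. -/
def HasCovDimLE (Y : Type) [TopologicalSpace Y] (m : ℕ) : Prop :=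
  ∀ U : Finset (Set Y), (∀ u ∈ U, IsOpen u) → ⋃₀ (U : Set (Set Y)) = Set.univ →
    ∃ V : Finset (Set Y), (∀ v ∈ V, IsOpen v) ∧ ⋃₀ (V : Set (Set Y)) = Set.univ ∧
      (∀ v ∈ V, ∃ u ∈ U, v ⊆ u) ∧
      ∀ y : Y, {v ∈ (V : Set (Set Y)) | y ∈ v}.ncard ≤ m + 1

/-- The covering dimension of a topological space, as an element of `ℕ∞` (`⊤` if no finite
`m` works). -/
def covDim (Y : Type) [TopologicalSpace Y] : ℕ∞ :=
  sInf {d : ℕ∞ | ∃ m : ℕ, d = (m : ℕ∞) ∧ HasCovDimLE Y m}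

/-- The underlying graded groups of: relative singular homology `H_k(Y, A; R)` (with
`H_k(Y; R) = H_k(Y, ∅; R)`), singular cohomology `H^k(Y; G)`, Čech cohomology `Ȟ^k(Y; R)`
and the `Ext`-term `Ext¹_R(H_{k-1}(Y; R), G)` of the universal coefficient theorem. -/
structure CohomologyData (R : Type) [CommRing R] (G : Type) [AddCommGroup G] [Module R G] where
  /-- relative singular homology `H_k(Y, A; R)` -/
  Hrel : ∀ (Y : Type) [TopologicalSpace Y], Set Y → ℤ → Type
  instHrelAdd : ∀ (Y : Type) [TopologicalSpace Y] (A : Set Y) (k : ℤ), AddCommGroup (Hrel Y A k)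
  instHrelMod : ∀ (Y : Type) [TopologicalSpace Y] (A : Set Y) (k : ℤ), Module R (Hrel Y A k)
  /-- singular cohomology `H^k(Y; G)` -/
  Hco : ∀ (Y : Type) [TopologicalSpace Y], ℤ → Type
  instHcoAdd : ∀ (Y : Type) [TopologicalSpace Y] (k : ℤ), AddCommGroup (Hco Y k)
  /-- Čech cohomology `Ȟ^k(Y; R)` -/
  Hcech : ∀ (Y : Type) [TopologicalSpace Y], ℤ → Type
  instHcechAdd : ∀ (Y : Type) [TopologicalSpace Y] (k : ℤ), AddCommGroup (Hcech Y k)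
  /-- the group `Ext¹_R(H_{k-1}(Y; R), G)` appearing in the universal coefficient theorem -/
  ExtUCT : ∀ (Y : Type) [TopologicalSpace Y], ℤ → Type
  instExtAdd : ∀ (Y : Type) [TopologicalSpace Y] (k : ℤ), AddCommGroup (ExtUCT Y k)

attribute [instance] CohomologyData.instHrelAdd CohomologyData.instHrelMod
  CohomologyData.instHcoAdd CohomologyData.instHcechAdd CohomologyData.instExtAdd

/-- An axiomatization of the package consisting of singular homology of pairs (with
coefficients in a PID `R`), singular cohomology (with coefficients in an `R`-module `G`) and
Čech cohomology (with coefficients in `R`), together with: functoriality, the Kronecker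
pairing `α` (written `pair`, `α^k(η)(ξ) = ⟨η, ξ⟩`) and its naturality, the universal
coefficient exact sequence
`0 → Ext¹_R(H_{k-1}(Y;R), G) →^{β^k} H^k(Y;G) →^{α^k} Hom_R(H_k(Y;R), G) → 0`
(exactness at `H^k` and vanishing of the `Ext`-term on free homology), the homology long
exact sequence of a pair (the part `im j_* = ker π_*`), and the fact that non-vanishing of
`Ȟ^m` of a compact Hausdorff space forces its covering dimension to be at least `m`.
All of these are classical facts about the (co)homology of topological spaces; they are the
only properties used in the paper. -/
structure Theory (R : Type) [CommRing R] [IsDomain R] [IsPrincipalIdealRing R]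
    (G : Type) [AddCommGroup G] [Module R G] extends CohomologyData R G where
  /-- functoriality of relative homology for maps of pairs -/
  hmap : ∀ {Y Z : Type} [TopologicalSpace Y] [TopologicalSpace Z]
    (f : C(Y, Z)) {A : Set Y} {B : Set Z}, Set.MapsTo f A B →
    ∀ k : ℤ, Hrel Y A k →ₗ[R] Hrel Z B k
  /-- contravariant functoriality of singular cohomology -/
  cmap : ∀ {Y Z : Type} [TopologicalSpace Y] [TopologicalSpace Z]
    (f : C(Y, Z)) (k : ℤ), Hco Z k →+ Hco Y k
  cmap_id : ∀ (Y : Type) [TopologicalSpace Y] (k : ℤ) (x : Hco Y k),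
    cmap (ContinuousMap.id Y) k x = x
  /-- contravariant functoriality of Čech cohomology -/
  ccmap : ∀ {Y Z : Type} [TopologicalSpace Y] [TopologicalSpace Z]
    (f : C(Y, Z)) (k : ℤ), Hcech Z k →+ Hcech Y k
  /-- the Kronecker pairing `α^k : H^k(Y;G) → Hom_R(H_k(Y;R), G)`, `α^k(η)(ξ) = ⟨η, ξ⟩` -/
  pair : ∀ (Y : Type) [TopologicalSpace Y] (k : ℤ),
    Hco Y k →+ (Hrel Y (∅ : Set Y) k →ₗ[R] G)
  /-- naturality of the Kronecker pairing: `⟨f^*η, ξ⟩ = ⟨η, f_*ξ⟩` -/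
  pair_natural : ∀ {Y Z : Type} [TopologicalSpace Y] [TopologicalSpace Z] (f : C(Y, Z)) (k : ℤ)
    (η : Hco Z k) (ξ : Hrel Y (∅ : Set Y) k),
    pair Y k (cmap f k η) ξ = pair Z k η (hmap f (Set.mapsTo_empty _ _) k ξ)
  /-- the map `β^k : Ext¹_R(H_{k-1}(Y;R), G) → H^k(Y;G)` of the universal coefficient
  theorem -/
  betaMap : ∀ (Y : Type) [TopologicalSpace Y] (k : ℤ), ExtUCT Y k →+ Hco Y k
  /-- exactness of the universal coefficient sequence at `H^k(Y;G)`: `ker α^k = im β^k` -/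
  uct_exact : ∀ (Y : Type) [TopologicalSpace Y] (k : ℤ) (x : Hco Y k),
    pair Y k x = 0 ↔ x ∈ Set.range (betaMap Y k)
  /-- `Ext¹_R(H_{k-1}(Y;R), G)` vanishes if `H_{k-1}(Y;R)` is a free `R`-module -/
  uct_free : ∀ (Y : Type) [TopologicalSpace Y] (k : ℤ),
    Module.Free R (Hrel Y (∅ : Set Y) (k - 1)) → ∀ z : ExtUCT Y k, betaMap Y k z = 0
  /-- exactness of the long exact homology sequence of the pair `(X, X ∖ A)` at `H_k(X)`:
  `π_* ξ = 0` iff `ξ` comes from `H_k(X ∖ A)` -/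
  les_exact : ∀ (X : Type) [TopologicalSpace X] (A : Set X) (k : ℤ)
    (ξ : Hrel X (∅ : Set X) k),
    hmap (ContinuousMap.id X) (Set.mapsTo_empty _ _) k ξ = (0 : Hrel X Aᶜ k) ↔
      ∃ ζ : Hrel (↥(Aᶜ)) (∅ : Set ↥(Aᶜ)) k,
        hmap (⟨Subtype.val, continuous_subtype_val⟩ : C(↥(Aᶜ), X))
          (Set.mapsTo_empty _ _) k ζ = ξ
  /-- if the Čech cohomology `Ȟ^m(Y;R)` of a compact Hausdorff space is non-trivial
  then its covering dimension is at least `m` -/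
  dim_cech : ∀ (Y : Type) [TopologicalSpace Y] [CompactSpace Y] [T2Space Y] (m : ℕ),
    (∃ x : Hcech Y (m : ℤ), x ≠ 0) → (m : ℕ∞) ≤ covDim Y

/-- `X` is `R`-orientable (with respect to the homology theory `T`) if there is a compatible
continuous choice `o(λ)` of generators of the local homology modules
`H_n(X, X ∖ {λ}; R) ≅ R`: i.e. an open cover `{U_i}` of `X` and classes
`μ_i ∈ H_n(X, X ∖ U_i; R)` restricting to `o(λ)` for every `λ ∈ U_i`. -/
def ROrientable {R : Type} [CommRing R] [IsDomain R] [IsPrincipalIdealRing R]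
    {G : Type} [AddCommGroup G] [Module R G] (T : Theory R G)
    (n : ℕ) (X : Type) [TopologicalSpace X] : Prop :=
  ∃ o : ∀ x : X, T.Hrel X ({x}ᶜ) (n : ℤ),
    (∀ x, Submodule.span R {o x} = ⊤) ∧
    ∃ (ι : Type) (U : ι → Set X), (∀ i, IsOpen (U i)) ∧ (∀ x, ∃ i, x ∈ U i) ∧
      ∃ μ : ∀ i, T.Hrel X ((U i)ᶜ) (n : ℤ),
        ∀ (i) (x) (hx : x ∈ U i),
          T.hmap (ContinuousMap.id X)
            ((Set.mapsTo_id _).mono_right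
              (Set.compl_subset_compl.mpr (Set.singleton_subset_iff.mpr hx)))
            (n : ℤ) (μ i) = o x

/-- The full package: the (co)homology theories together with Poincaré–Lefschetz duality for
closed `R`-orientable topological `n`-manifolds (in the form of [Bredon, Cor. VI.8.4]: for a
closed subset `A ⊆ X` there is a commutative square consisting of the duality isomorphisms
`Ȟ^{n-k}(X;R) ≅ H_k(X;R)` and `Ȟ^{n-k}(A;R) ≅ H_k(X, X∖A;R)`, the restriction
`i^* : Ȟ^{n-k}(X;R) → Ȟ^{n-k}(A;R)` and `π_* : H_k(X;R) → H_k(X, X∖A;R)`), and the fact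
that every closed topological manifold is `R`-orientable when `2 = 0` in `R`. -/
structure GoodTheory (R : Type) [CommRing R] [IsDomain R] [IsPrincipalIdealRing R]
    (G : Type) [AddCommGroup G] [Module R G] extends Theory R G where
  /-- Poincaré–Lefschetz duality -/
  pd : ∀ (n : ℕ) (X : Type) [TopologicalSpace X] [T2Space X]
    [ChartedSpace (EuclideanSpace ℝ (Fin n)) X] [CompactSpace X],
    ROrientable toTheory n X →
    ∀ (k : ℤ) (A : Set X), IsClosed A →
      ∃ (pdX : Hcech X ((n : ℤ) - k) ≃+ Hrel X (∅ : Set X) k)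
        (pdA : Hcech (↥A) ((n : ℤ) - k) ≃+ Hrel X Aᶜ k),
        ∀ η : Hcech X ((n : ℤ) - k),
          pdA (ccmap (⟨Subtype.val, continuous_subtype_val⟩ : C(↥A, X)) ((n : ℤ) - k) η) =
          hmap (ContinuousMap.id X) (Set.mapsTo_empty _ _) k (pdX η)
  /-- every closed topological manifold is `R`-orientable if `2 = 0` in `R` -/
  orient_two : (2 : R) = 0 → ∀ (n : ℕ) (X : Type) [TopologicalSpace X] [T2Space X]
    [ChartedSpace (EuclideanSpace ℝ (Fin n)) X] [CompactSpace X],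
    ROrientable toTheory n X

/-- A (finite rank) vector bundle over the base `Y` with scalar field `𝕜`, packaged as a
structure: a model fibre `F` and a family of fibres `E y` together with all the data making
it a topological vector bundle. -/
structure VB (𝕜 : Type) [NontriviallyNormedField 𝕜] (Y : Type) [TopologicalSpace Y] :
    Type 1 where
  /-- the model fibre -/
  F : Type
  [nF : NormedAddCommGroup F]
  [sF : NormedSpace 𝕜 F]
  [fdF : FiniteDimensional 𝕜 F]
  /-- the fibres -/
  E : Y → Type
  [aE : ∀ y, AddCommGroup (E y)]
  [mE : ∀ y, Module 𝕜 (E y)]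
  [tE : ∀ y, TopologicalSpace (E y)]
  [tT : TopologicalSpace (Bundle.TotalSpace F E)]
  [fb : FiberBundle F E]
  [vb : VectorBundle 𝕜 F E]

attribute [instance] VB.nF VB.sF VB.fdF VB.aE VB.mE VB.tE VB.tT VB.fb VB.vb

/-- A morphism of vector bundles over `X`: a fibrewise (continuous) linear map which is
continuous as a map of total spaces. -/
def IsBundleMorphism {𝕜 : Type} [NontriviallyNormedField 𝕜] {X : Type} [TopologicalSpace X]
    (V W : VB 𝕜 X) (L : ∀ x, V.E x →L[𝕜] W.E x) : Prop :=
  Continuous fun p : Bundle.TotalSpace V.F V.E =>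
    (Bundle.TotalSpace.mk p.1 (L p.1 p.2) : Bundle.TotalSpace W.F W.E)

/-- The singular set `Σ(L) = {λ ∈ X | L_λ ∉ GL(E_λ, F_λ)}` of a bundle morphism `L`:
the set of points of the base over which `L` is not a linear isomorphism of fibres. -/
def singularSet {𝕜 : Type} [NontriviallyNormedField 𝕜] {X : Type} [TopologicalSpace X]
    (V W : VB 𝕜 X) (L : ∀ x, V.E x →L[𝕜] W.E x) : Set X :=
  {x : X | ¬ Function.Bijective (L x)}

/-- An `H^k(·;G)`-valued characteristic class `c`: it assigns to every vector bundle over a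
base `Y` a class `c(E) ∈ H^k(Y;G)`, such that `c(E₁) = f^* c(E₂)` whenever a continuous map
`f : Y → Z` is covered by a (fibrewise isomorphic, continuous) bundle map `E₁ → E₂`. -/
structure CharClass {R : Type} [CommRing R] [IsDomain R] [IsPrincipalIdealRing R]
    {G : Type} [AddCommGroup G] [Module R G] (T : GoodTheory R G)
    (𝕜 : Type) [NontriviallyNormedField 𝕜] (k : ℤ) where
  /-- the value of the characteristic class on a bundle -/
  cls : ∀ (Y : Type) [TopologicalSpace Y], VB 𝕜 Y → T.Hco Y k
  /-- naturality with respect to bundle maps covering continuous maps -/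
  natural : ∀ (Y Z : Type) [TopologicalSpace Y] [TopologicalSpace Z]
    (V : VB 𝕜 Y) (W : VB 𝕜 Z) (f : C(Y, Z)) (φ : ∀ y, V.E y ≃ₗ[𝕜] W.E (f y)),
    Continuous (fun p : Bundle.TotalSpace V.F V.E =>
      (Bundle.TotalSpace.mk (f p.1) (φ p.1 p.2) : Bundle.TotalSpace W.F W.E)) →
    cls Y V = T.cmap f k (cls Z W)

section Auxiliary

variable {X : Type} [TopologicalSpace X]

/-- The singular set of a bundle morphism between bundles of equal finite rank is closed. -/
theorem isClosed_singularSet (V W : VB ℝ X)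
    (hrank : Module.finrank ℝ V.F = Module.finrank ℝ W.F)
    (L : ∀ x, V.E x →L[ℝ] W.E x) (hL : IsBundleMorphism V W L) :
    IsClosed (singularSet V W L) := by
  classical
  rw [← isOpen_compl_iff, isOpen_iff_forall_mem_open]
  intro x₀ hx₀
  set eV := trivializationAt V.F V.E x₀ with heV
  set eW := trivializationAt W.F W.E x₀ with heW
  have hVx₀ : x₀ ∈ eV.baseSet := FiberBundle.mem_baseSet_trivializationAt V.F V.E x₀
  have hWx₀ : x₀ ∈ eW.baseSet := FiberBundle.mem_baseSet_trivializationAt W.F W.E x₀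
  set S : Set X := eV.baseSet ∩ eW.baseSet with hS
  have hSopen : IsOpen S := eV.open_baseSet.inter eW.open_baseSet
  set bV : Basis (Fin (Module.finrank ℝ V.F)) ℝ V.F := Module.finBasis ℝ V.F with hbV
  set bW : Basis (Fin (Module.finrank ℝ V.F)) ℝ W.F :=
    (Module.finBasis ℝ W.F).reindex (finCongr hrank.symm) with hbW
  set M : X → Matrix (Fin (Module.finrank ℝ V.F)) (Fin (Module.finrank ℝ V.F)) ℝ :=
    fun x i j => bW.repr ((eW ⟨x, L x (eV.symm x (bV j))⟩).2) i with hM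
  -- continuity of the matrix entries on `S`
  have hentry : ∀ i j, ContinuousOn (fun x => M x i j) S := by
    intro i j
    have h1 : ContinuousOn
        (fun x => (⟨x, eV.symm x (bV j)⟩ : Bundle.TotalSpace V.F V.E)) S := by
      refine (eV.continuousOn_symm.comp
        ((continuous_id.prodMk continuous_const).continuousOn) ?_)
      exact fun x hx => ⟨hx.1, mem_univ _⟩
    have h2 : ContinuousOn
        (fun x => (⟨x, L x (eV.symm x (bV j))⟩ : Bundle.TotalSpace W.F W.E)) S :=
      hL.comp_continuousOn h1
    have h3 : ContinuousOn (fun x => (eW (⟨x, L x (eV.symm x (bV j))⟩ :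
        Bundle.TotalSpace W.F W.E)).2) S := by
      refine continuous_snd.comp_continuousOn (eW.continuousOn.comp h2 ?_)
      intro x hx
      rw [eW.mem_source]
      exact hx.2
    have h4 : Continuous fun w : W.F => bW.repr w i :=
      LinearMap.continuous_of_finiteDimensional (bW.coord i)
    exact h4.comp_continuousOn h3
  have hMcont : ContinuousOn (fun x => (M x).det) S := by
    refine Continuous.comp_continuousOn ?_ (continuousOn_pi.mpr fun i =>
      continuousOn_pi.mpr fun j => hentry i j)
    exact Continuous.matrix_det (continuous_id)
  -- identification of the matrix with the morphism in the trivializations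
  have hMkey : ∀ x (hx : x ∈ S), ((M x).det ≠ 0 ↔ Function.Bijective (L x)) := by
    intro x hx
    set φV := eV.continuousLinearEquivAt ℝ x hx.1 with hφV
    set φW := eW.continuousLinearEquivAt ℝ x hx.2 with hφW
    set A : V.F →ₗ[ℝ] W.F :=
      (φW.toLinearEquiv : W.E x →ₗ[ℝ] W.F) ∘ₗ (L x : V.E x →ₗ[ℝ] W.E x) ∘ₗ
        (φV.symm.toLinearEquiv : V.F →ₗ[ℝ] V.E x) with hAdef
    have hMA : M x = LinearMap.toMatrix bV bW A := by
      ext i j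
      rw [LinearMap.toMatrix_apply]
      rfl
    have hAfun : (A : V.F → W.F) = ⇑φW ∘ ⇑(L x) ∘ ⇑φV.symm := rfl
    constructor
    · intro hdet
      have hu : IsUnit (LinearMap.toMatrix bV bW A).det :=
        isUnit_iff_ne_zero.mpr (by rw [← hMA]; exact hdet)
      have hA : Function.Bijective A := by
        have hcoe : (LinearEquiv.ofIsUnitDet hu : V.F →ₗ[ℝ] W.F) = A :=
          LinearEquiv.coe_ofIsUnitDet hu
        have hAe : A = (LinearEquiv.ofIsUnitDet hu : V.F →ₗ[ℝ] W.F) := hcoe.symm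
        rw [hAe]
        simp only [LinearEquiv.coe_coe]
        exact (LinearEquiv.ofIsUnitDet hu).bijective
      have : Function.Bijective (⇑φW.symm ∘ ⇑A ∘ ⇑φV) :=
        (φW.symm.bijective.comp hA).comp φV.bijective
      have hfun : (⇑φW.symm ∘ ⇑A ∘ ⇑φV) = ⇑(L x) := by
        rw [hAfun]
        ext v
        simp
      rwa [hfun] at this
    · intro hbij
      have hA : Function.Bijective A := by
        rw [show (⇑A = ⇑φW ∘ ⇑(L x) ∘ ⇑φV.symm) from rfl]
        exact (φW.bijective.comp hbij).comp φV.symm.bijective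
      have : IsUnit (LinearMap.toMatrix bV bW A).det :=
        LinearEquiv.isUnit_det (LinearEquiv.ofBijective A hA) bV bW
      rw [hMA]
      exact isUnit_iff_ne_zero.mp this
  refine ⟨S ∩ (fun x => (M x).det) ⁻¹' {0}ᶜ, ?_, ?_, ?_⟩
  · intro x hx
    simp only [mem_compl_iff, singularSet, mem_setOf_eq, not_not]
    exact (hMkey x hx.1).mp hx.2
  · exact hMcont.isOpen_inter_preimage hSopen (isOpen_compl_singleton)
  · refine ⟨⟨hVx₀, hWx₀⟩, ?_⟩
    simp only [mem_preimage, mem_compl_iff, mem_singleton_iff]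
    exact (hMkey x₀ ⟨hVx₀, hWx₀⟩).mpr (not_not.mp hx₀)

/-- Restriction (pullback along the inclusion) of a vector bundle to a subset of the base. -/
def VB.restrict (V : VB ℝ X) (U : Set X) : VB ℝ ↥U where
  F := V.F
  nF := V.nF
  sF := V.sF
  fdF := V.fdF
  E := (((⟨Subtype.val, continuous_subtype_val⟩ : C(↥U, X)) : ↥U → X)) *ᵖ V.E
  aE y := inferInstanceAs (AddCommGroup (V.E (y : X)))
  mE y := inferInstanceAs (Module ℝ (V.E (y : X)))
  tE y := inferInstanceAs (TopologicalSpace (V.E (y : X)))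
  tT := Pullback.TotalSpace.topologicalSpace V.F V.E _
  fb := inferInstanceAs (FiberBundle V.F
    ((((⟨Subtype.val, continuous_subtype_val⟩ : C(↥U, X)) : ↥U → X)) *ᵖ V.E))
  vb := inferInstanceAs (VectorBundle ℝ V.F
    ((((⟨Subtype.val, continuous_subtype_val⟩ : C(↥U, X)) : ↥U → X)) *ᵖ V.E))

/-- A criterion for continuity of maps into the total space of a pullback bundle. -/
theorem continuous_into_pullback {Z B B' : Type} [TopologicalSpace Z] [TopologicalSpace B]
    [TopologicalSpace B'] (F : Type) (E : B → Type) [∀ x, TopologicalSpace (E x)]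
    [TopologicalSpace (Bundle.TotalSpace F E)] (f : B' → B)
    (g : Z → Bundle.TotalSpace F (f *ᵖ E))
    (h1 : Continuous fun z => (g z).proj)
    (h2 : Continuous fun z => Bundle.Pullback.lift f (g z)) : Continuous g := by
  rw [continuous_iff_le_induced,
    show (Pullback.TotalSpace.topologicalSpace F E f : TopologicalSpace
      (Bundle.TotalSpace F (f *ᵖ E))) = pullbackTopology F E f from rfl,
    pullbackTopology_def, induced_inf, induced_compose, induced_compose]
  exact le_inf (continuous_iff_le_induced.mp h1) (continuous_iff_le_induced.mp h2)

/-- Restricting a characteristic class to a subset of the base. -/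
theorem cls_restrict {T : GoodTheory ℤ ℤ} (p : CharClass T ℝ (4 : ℤ)) (V : VB ℝ X)
    (U : Set X) :
    p.cls ↥U (V.restrict U) =
      T.cmap (⟨Subtype.val, continuous_subtype_val⟩ : C(↥U, X)) (4 : ℤ) (p.cls X V) := by
  refine p.natural ↥U X (V.restrict U) V ⟨Subtype.val, continuous_subtype_val⟩
    (fun y => LinearEquiv.refl ℝ (V.E (y : X))) ?_
  exact Pullback.continuous_lift V.F V.E _

/-- If a bundle morphism is a fibrewise isomorphism over `U`, the restricted bundles have
the same characteristic class. -/
theorem cls_restrict_eq {T : GoodTheory ℤ ℤ} (p : CharClass T ℝ (4 : ℤ)) (V W : VB ℝ X)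
    (L : ∀ x, V.E x →L[ℝ] W.E x) (hL : IsBundleMorphism V W L) (U : Set X)
    (hbij : ∀ y : ↥U, Function.Bijective (L (y : X))) :
    p.cls ↥U (V.restrict U) = p.cls ↥U (W.restrict U) := by
  have h := p.natural ↥U ↥U (V.restrict U) (W.restrict U) (ContinuousMap.id ↥U)
    (fun y => LinearEquiv.ofBijective ((L (y : X)).toLinearMap) (hbij y)) ?_
  · rw [h, T.cmap_id]
  · refine continuous_into_pullback W.F W.E _ _ ?_ ?_
    · exact Pullback.continuous_proj V.F V.E _
    · exact hL.comp (Pullback.continuous_lift V.F V.E _)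

end Auxiliary

/-- Let `X` be a closed orientable (i.e. `ℤ`-orientable) topological
manifold of dimension `n`, `E` and `F` real vector bundles of the same fibre dimension over
`X`, and `L : E → F` a bundle morphism. If the first Pontryagin classes satisfy
`p₁(E) - p₁(F) ∉ im β⁴ ⊆ H⁴(X;ℤ)`, where `β⁴ : Ext¹_ℤ(H₃(X;ℤ),ℤ) → H⁴(X;ℤ)` is the map
from the universal coefficient theorem, then the covering dimension of `Σ(L)` is at least
`n - 4`. (The first Pontryagin class is represented by an `H⁴(·;ℤ)`-valued characteristic
class `p` of real vector bundles, since its only property used is naturality.) -/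
theorem covDim_ge_of_pontryagin
    (T : GoodTheory ℤ ℤ)
    (n : ℕ) (X : Type) [TopologicalSpace X] [T2Space X]
    [ChartedSpace (EuclideanSpace ℝ (Fin n)) X] [CompactSpace X]
    (hor : ROrientable T.toTheory n X)
    (V W : VB ℝ X) (hrank : Module.finrank ℝ V.F = Module.finrank ℝ W.F)
    (L : ∀ x, V.E x →L[ℝ] W.E x) (hL : IsBundleMorphism V W L)
    (p : CharClass T ℝ (4 : ℤ))
    (hp : p.cls X V - p.cls X W ∉ Set.range (T.betaMap X (4 : ℤ))) :
    ((n - 4 : ℕ) : ℕ∞) ≤ covDim ↥(singularSet V W L) := by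
  classical
  have hAclosed : IsClosed (singularSet V W L) := isClosed_singularSet V W hrank L hL
  set c : T.Hco X (4 : ℤ) := p.cls X V - p.cls X W with hc
  -- the restriction of `c` to the complement of the singular set vanishes
  have hres : T.cmap (⟨Subtype.val, continuous_subtype_val⟩ :
      C(↥((singularSet V W L)ᶜ), X)) (4 : ℤ) c = 0 := by
    have h1 := cls_restrict p V ((singularSet V W L)ᶜ)
    have h2 := cls_restrict p W ((singularSet V W L)ᶜ)
    have h3 := cls_restrict_eq p V W L hL ((singularSet V W L)ᶜ)
      (fun y => not_not.mp y.2)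
    rw [hc, map_sub, ← h1, ← h2, h3, sub_self]
  -- the Kronecker pairing with `c` is nonzero
  have hpair : T.pair X (4 : ℤ) c ≠ 0 := fun h => hp ((T.uct_exact X (4 : ℤ) c).mp h)
  obtain ⟨ξ, hξ⟩ : ∃ ξ, T.pair X (4 : ℤ) c ξ ≠ 0 := by
    by_contra h
    push_neg at h
    exact hpair (DFunLike.ext _ _ h)
  -- `ξ` has non-trivial image in the relative homology of the pair
  have hπ : T.hmap (ContinuousMap.id X) (Set.mapsTo_empty _ _) (4 : ℤ) ξ ≠
      (0 : T.Hrel X ((singularSet V W L)ᶜ) (4 : ℤ)) := by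
    intro h0
    obtain ⟨ζ, hζ⟩ := (T.les_exact X (singularSet V W L) (4 : ℤ) ξ).mp h0
    have hnat := T.pair_natural (⟨Subtype.val, continuous_subtype_val⟩ :
      C(↥((singularSet V W L)ᶜ), X)) (4 : ℤ) c ζ
    rw [hζ, hres] at hnat
    simp only [map_zero, LinearMap.zero_apply] at hnat
    exact hξ hnat.symm
  -- Poincaré–Lefschetz duality
  obtain ⟨pdX, pdA, hcomm⟩ := T.pd n X hor (4 : ℤ) (singularSet V W L) hAclosed
  have hη : T.ccmap (⟨Subtype.val, continuous_subtype_val⟩ :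
      C(↥(singularSet V W L), X)) ((n : ℤ) - 4) (pdX.symm ξ) ≠ 0 := by
    intro h0
    apply hπ
    have := hcomm (pdX.symm ξ)
    rw [h0, map_zero, pdX.apply_symm_apply] at this
    exact this.symm
  rcases Nat.lt_or_ge n 4 with hn4 | hn4
  · have h0 : n - 4 = 0 := by omega
    rw [h0]
    simp
  · haveI : CompactSpace ↥(singularSet V W L) :=
      isCompact_iff_compactSpace.mp hAclosed.isCompact
    refine T.dim_cech ↥(singularSet V W L) (n - 4) ?_
    have hcast : (((n - 4 : ℕ) : ℤ)) = (n : ℤ) - 4 := by omega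
    rw [hcast]
    exact ⟨_, hη⟩

end
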